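/- Assume k₁ ≤ m. Let λ ∈ ℂ with λ ∉ a(𝕋), set p = p(λ), and assume the p roots ξ_1, …, ξ_p of b_λ in the open unit disk are pairwise distinct. For α ∈ ℂ^p let v_α ∈ ℓ² be the sequence (v_α)_i = ∑_{t=1}^{p} α_t ξ_t^{i−1}. Then λ is an eigenvalue of A = T(a) + E if and only if there exists α ∈ ℂ^p, α ≠ 0, such that ((A − λI) v_α)_k = 0 for k = 1, …, m; in that case v_α ≠ 0 and A v_α = λ v_α. -/

import Mathlib

open scoped ENNReal

noncomputable section

/-- The polynomial `b_λ(z) = z^m (a(z) - λ) = ∑_{k=0}^{m+n} a_{k-m} z^k - λ z^m`. -/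
def bpoly (m n : ℕ) (a : ℤ → ℂ) (lam : ℂ) : Polynomial ℂ :=
  (∑ k ∈ Finset.range (m + n + 1), Polynomial.C (a ((k : ℤ) - (m : ℤ))) * Polynomial.X ^ k)
    - Polynomial.C lam * Polynomial.X ^ m

/-- `p(λ)`: the number of roots of `b_λ` in the open unit disk, counted with multiplicity. -/
def rootCount (m n : ℕ) (a : ℤ → ℂ) (lam : ℂ) : ℕ :=
  Multiset.card ((bpoly m n a lam).roots.filter fun z => ‖z‖ < 1)

/-- The value `a(z) = ∑_{k=-m}^{n} a_k z^k` of the Laurent polynomial. -/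
def aval (m n : ℕ) (a : ℤ → ℂ) (z : ℂ) : ℂ :=
  ∑ k ∈ Finset.Icc (-(m : ℤ)) (n : ℤ), a k * z ^ k

/-- The image `a(𝕋)` of the unit circle under the Laurent polynomial `a`. -/
def aCircle (m n : ℕ) (a : ℤ → ℂ) : Set ℂ :=
  {w : ℂ | ∃ z : ℂ, ‖z‖ = 1 ∧ aval m n a z = w}

/-- The Hilbert space `ℓ²` of square-summable complex sequences (0-indexed). -/
abbrev ell2 := lp (fun _ : ℕ => ℂ) 2


section Aux

open Polynomial Filter

/-- Shift operator on sequences. -/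
def shiftL : (ℕ → ℂ) →ₗ[ℂ] (ℕ → ℂ) where
  toFun v := fun s => v (s + 1)
  map_add' _ _ := rfl
  map_smul' _ _ := rfl

lemma shiftL_pow (k : ℕ) (v : ℕ → ℂ) (s : ℕ) : ((shiftL ^ k) v) s = v (s + k) := by
  induction k generalizing s with
  | zero => rfl
  | succ k ih =>
    rw [pow_succ']
    show ((shiftL ^ k) v) (s + 1) = _
    rw [ih]
    congr 1
    omega

lemma aeval_shiftL_apply (P : ℂ[X]) {N : ℕ} (hN : P.natDegree < N) (v : ℕ → ℂ) (s : ℕ) :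
    ((Polynomial.aeval shiftL P) v) s = ∑ k ∈ Finset.range N, P.coeff k * v (s + k) := by
  rw [Polynomial.aeval_eq_sum_range' hN]
  rw [LinearMap.coe_sum, Finset.sum_apply, Finset.sum_apply]
  refine Finset.sum_congr rfl fun k _ => ?_
  rw [LinearMap.smul_apply, Pi.smul_apply, shiftL_pow, smul_eq_mul]

lemma aeval_shiftL_tendsto (P : ℂ[X]) {v : ℕ → ℂ} (hv : Tendsto v atTop (nhds 0)) :
    Tendsto ((Polynomial.aeval shiftL P) v) atTop (nhds 0) := by
  have h : (Polynomial.aeval shiftL P) v =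
      fun s => ∑ k ∈ Finset.range (P.natDegree + 1), P.coeff k * v (s + k) := by
    funext s; exact aeval_shiftL_apply P (Nat.lt_succ_self _) v s
  rw [h]
  have : Tendsto (fun s => ∑ k ∈ Finset.range (P.natDegree + 1), P.coeff k * v (s + k))
      atTop (nhds (∑ k ∈ Finset.range (P.natDegree + 1), P.coeff k * 0)) := by
    apply tendsto_finset_sum
    intro k _
    exact (hv.comp (tendsto_add_atTop_nat k)).const_mul _
  simpa using this

lemma geom_of_shift_eq {μ : ℂ} {w : ℕ → ℂ} (h : ∀ s, w (s + 1) = μ * w s) (s : ℕ) :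
    w s = μ ^ s * w 0 := by
  induction s with
  | zero => simp
  | succ s ih => rw [h s, ih, pow_succ]; ring

lemma unstable_kill (M : Multiset ℂ) (hM : ∀ μ ∈ M, 1 < ‖μ‖) :
    ∀ w : ℕ → ℂ, Tendsto w atTop (nhds 0) →
      (Polynomial.aeval shiftL ((M.map fun μ => X - C μ).prod)) w = 0 → w = 0 := by
  induction M using Multiset.induction_on with
  | empty => intro w _ h; simpa using h
  | cons μ M ih =>
    intro w hw h
    have hμ : 1 < ‖μ‖ := hM μ (Multiset.mem_cons_self _ _)
    rw [Multiset.map_cons, Multiset.prod_cons, mul_comm, map_mul] at h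
    set u : ℕ → ℂ := (Polynomial.aeval shiftL (X - C μ)) w with hu
    have hps : (Polynomial.aeval shiftL ((M.map fun μ => X - C μ).prod)) u = 0 := h
    have hut : Tendsto u atTop (nhds 0) := aeval_shiftL_tendsto _ hw
    have hu0 : u = 0 := ih (fun ν hν => hM ν (Multiset.mem_cons_of_mem hν)) u hut hps
    -- u = shift w - μ w = 0
    have hrec : ∀ s, w (s + 1) = μ * w s := by
      intro s
      have : u s = 0 := by rw [hu0]; rfl
      rw [hu] at this
      simp only [map_sub, Polynomial.aeval_X, Polynomial.aeval_C] at this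
      have h2 : (shiftL w) s - ((algebraMap ℂ (Module.End ℂ (ℕ → ℂ)) μ) w) s = 0 := by
        exact this
      have h3 : ((algebraMap ℂ (Module.End ℂ (ℕ → ℂ)) μ) w) s = μ * w s := rfl
      have h4 : (shiftL w) s = w (s + 1) := rfl
      rw [h3, h4] at h2
      linear_combination h2
    have hw0 : w 0 = 0 := by
      by_contra h0
      have hb : ∀ s, ‖w 0‖ ≤ ‖w s‖ := by
        intro s
        rw [geom_of_shift_eq hrec s, norm_mul, norm_pow]
        have h1 : 1 ≤ ‖μ‖ ^ s := one_le_pow₀ hμ.le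
        nlinarith [norm_nonneg (w 0)]
      have hpos : 0 < ‖w 0‖ := by
        simpa [norm_pos_iff] using h0
      have hev : ∀ᶠ s in atTop, ‖w s‖ < ‖w 0‖ :=
        (NormedAddCommGroup.tendsto_nhds_zero.mp hw) _ hpos
      obtain ⟨s, hs⟩ := hev.exists
      exact absurd (hb s) hs.not_ge
    funext s
    rw [geom_of_shift_eq hrec s, hw0, mul_zero]
    rfl

lemma stable_rep (p : ℕ) (ξ : Fin p → ℂ) (hinj : Function.Injective ξ) (v : ℕ → ℂ)
    (h : (Polynomial.aeval shiftL (∏ t, (X - C (ξ t)))) v = 0) :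
    ∃ α : Fin p → ℂ, ∀ s, v s = ∑ t, α t * ξ t ^ s := by
  set P : ℂ[X] := ∏ t, (X - C (ξ t)) with hP
  have hmonic : P.Monic := monic_prod_of_monic _ _ fun t _ => monic_X_sub_C _
  have hdeg : P.natDegree = p := by
    rw [hP, Polynomial.natDegree_prod _ _ fun t _ => X_sub_C_ne_zero _]
    simp
  have hcoeffp : P.coeff p = 1 := by
    have := hmonic.coeff_natDegree
    rwa [hdeg] at this
  have hrec : ∀ s, ∑ k ∈ Finset.range (p + 1), P.coeff k * v (s + k) = 0 := by
    intro s
    have := congrFun h s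
    rw [aeval_shiftL_apply P (by omega : P.natDegree < p + 1)] at this
    exact this
  have hroot : ∀ t, P.eval (ξ t) = 0 := by
    intro t
    rw [hP, Polynomial.eval_prod]
    exact Finset.prod_eq_zero (Finset.mem_univ t) (by simp)
  have hrootrec : ∀ (t : Fin p) (s : ℕ),
      ∑ k ∈ Finset.range (p + 1), P.coeff k * ξ t ^ (s + k) = 0 := by
    intro t s
    have heval : P.eval (ξ t) = ∑ k ∈ Finset.range (p + 1), P.coeff k * ξ t ^ k :=
      Polynomial.eval_eq_sum_range' (by rw [hdeg]; exact Nat.lt_succ_self p) (ξ t)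
    calc ∑ k ∈ Finset.range (p + 1), P.coeff k * ξ t ^ (s + k)
        = ξ t ^ s * ∑ k ∈ Finset.range (p + 1), P.coeff k * ξ t ^ k := by
          rw [Finset.mul_sum]
          exact Finset.sum_congr rfl fun k _ => by rw [pow_add]; ring
      _ = ξ t ^ s * P.eval (ξ t) := by rw [heval]
      _ = 0 := by rw [hroot, mul_zero]
  -- Vandermonde matrix
  set M : Matrix (Fin p) (Fin p) ℂ := fun i t => ξ t ^ (i : ℕ) with hM
  have hdet : IsUnit M.det := by
    have hMt : M = (Matrix.vandermonde ξ).transpose := by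
      ext i t; rw [Matrix.transpose_apply, Matrix.vandermonde_apply]
    rw [hMt, Matrix.det_transpose, isUnit_iff_ne_zero]
    rw [Ne, Matrix.det_vandermonde_eq_zero_iff]
    rintro ⟨i, j, hij, hne⟩
    exact hne (hinj hij)
  set α : Fin p → ℂ := M⁻¹.mulVec (fun i : Fin p => v (i : ℕ)) with hα
  have h0 : ∀ i : Fin p, v i = ∑ t, α t * ξ t ^ (i : ℕ) := by
    have hMα : M.mulVec α = fun i : Fin p => v (i : ℕ) := by
      rw [hα, Matrix.mulVec_mulVec, Matrix.mul_nonsing_inv _ hdet, Matrix.one_mulVec]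
    intro i
    have := congrFun hMα i
    rw [Matrix.mulVec, dotProduct] at this
    rw [← this]
    exact Finset.sum_congr rfl fun t _ => by rw [hM]; ring
  refine ⟨α, fun s => ?_⟩
  induction s using Nat.strong_induction_on with
  | _ s ih =>
    by_cases hs : s < p
    · simpa using h0 ⟨s, hs⟩
    · have hs' : s - p + p = s := by omega
      set s' := s - p with hs'def
      have h1 := hrec s'
      rw [Finset.sum_range_succ, hcoeffp, one_mul, hs'] at h1
      have h2 : ∀ t : Fin p,
          ∑ k ∈ Finset.range p, P.coeff k * ξ t ^ (s' + k) + ξ t ^ s = 0 := by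
        intro t
        have := hrootrec t s'
        rwa [Finset.sum_range_succ, hcoeffp, one_mul, hs'] at this
      have h3 : v s = -∑ k ∈ Finset.range p, P.coeff k * v (s' + k) := by
        linear_combination h1
      rw [h3]
      have h4 : ∀ k ∈ Finset.range p, P.coeff k * v (s' + k) =
          ∑ t, α t * (P.coeff k * ξ t ^ (s' + k)) := by
        intro k hk
        rw [Finset.mem_range] at hk
        rw [ih (s' + k) (by omega), Finset.mul_sum]
        exact Finset.sum_congr rfl fun t _ => by ring
      rw [Finset.sum_congr rfl h4, Finset.sum_comm]
      have h5 : ∀ t : Fin p, ∑ k ∈ Finset.range p, α t * (P.coeff k * ξ t ^ (s' + k)) =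
          -(α t * ξ t ^ s) := by
        intro t
        rw [← Finset.mul_sum]
        have h6 : ∑ k ∈ Finset.range p, P.coeff k * ξ t ^ (s' + k) = -ξ t ^ s := by
          linear_combination h2 t
        rw [h6]; ring
      rw [Finset.sum_congr rfl fun t _ => h5 t]
      simp
variable {m n : ℕ} {a : ℤ → ℂ} {lam : ℂ}

lemma bpoly_coeff (j : ℕ) : (bpoly m n a lam).coeff j =
    (if j ≤ m + n then a ((j : ℤ) - (m : ℤ)) else 0) - (if j = m then lam else 0) := by
  rw [bpoly, Polynomial.coeff_sub, Polynomial.finset_sum_coeff]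
  congr 1
  · simp only [Polynomial.coeff_C_mul, Polynomial.coeff_X_pow, mul_ite, mul_one, mul_zero]
    rw [Finset.sum_ite_eq (Finset.range (m + n + 1)) j (fun k => a ((k : ℤ) - (m : ℤ)))]
    simp only [Finset.mem_range]
    split_ifs with h1 h2 h2 <;> first | rfl | omega
  · rw [Polynomial.coeff_C_mul, Polynomial.coeff_X_pow]
    split_ifs <;> simp

lemma bpoly_natDegree_le : (bpoly m n a lam).natDegree ≤ m + n := by
  rw [Polynomial.natDegree_le_iff_coeff_eq_zero]
  intro N hN
  rw [bpoly_coeff]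
  have h1 : ¬ N ≤ m + n := by omega
  have h2 : N ≠ m := by omega
  simp [h1, h2]

lemma bpoly_ne_zero (hm : 1 ≤ m) (ham : a (-(m : ℤ)) ≠ 0) : bpoly m n a lam ≠ 0 := by
  intro h
  have := bpoly_coeff (m := m) (n := n) (a := a) (lam := lam) 0
  rw [h] at this
  simp only [Polynomial.coeff_zero] at this
  have h1 : (0 : ℕ) ≤ m + n := by omega
  have h2 : (0 : ℕ) ≠ m := by omega
  rw [if_pos h1, if_neg h2, sub_zero] at this
  exact ham (by simpa using this.symm)

lemma sum_eq_eval (z : ℂ) : ∑ k ∈ Finset.range (m + n + 1), a ((k : ℤ) - (m : ℤ)) * z ^ k =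
    Polynomial.eval z (bpoly m n a lam) + lam * z ^ m := by
  rw [bpoly, Polynomial.eval_sub, Polynomial.eval_finset_sum]
  simp only [Polynomial.eval_mul, Polynomial.eval_C, Polynomial.eval_pow, Polynomial.eval_X]
  ring

lemma zpow_sum_eq {z : ℂ} (hz : z ≠ 0) : z ^ (m : ℕ) * aval m n a z =
    ∑ k ∈ Finset.range (m + n + 1), a ((k : ℤ) - (m : ℤ)) * z ^ k := by
  rw [aval, Finset.mul_sum]
  refine Finset.sum_nbij' (fun k : ℤ => (k + m).toNat) (fun j : ℕ => (j : ℤ) - m)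
    ?_ ?_ ?_ ?_ ?_
  · intro k hk
    rw [Finset.mem_Icc] at hk
    rw [Finset.mem_range]
    show (k + (m : ℤ)).toNat < m + n + 1
    omega
  · intro j hj
    rw [Finset.mem_range] at hj
    rw [Finset.mem_Icc]
    show -(m : ℤ) ≤ (j : ℤ) - m ∧ (j : ℤ) - m ≤ n
    omega
  · intro k hk
    rw [Finset.mem_Icc] at hk
    show (((k + (m : ℤ)).toNat : ℕ) : ℤ) - m = k
    omega
  · intro j hj
    rw [Finset.mem_range] at hj
    show ((((j : ℤ) - m) + m).toNat) = j
    omega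
  · intro k hk
    rw [Finset.mem_Icc] at hk
    have h1 : ((k + m).toNat : ℤ) - m = k := by omega
    rw [h1]
    have h2 : z ^ ((k + m).toNat : ℕ) = z ^ ((k : ℤ) + m) := by
      rw [← zpow_natCast]
      congr 1
      omega
    rw [h2, zpow_add₀ hz, ← zpow_natCast z m]
    ring

lemma bpoly_eval {z : ℂ} (hz : z ≠ 0) :
    Polynomial.eval z (bpoly m n a lam) = z ^ (m : ℕ) * (aval m n a z - lam) := by
  have h := sum_eq_eval (m := m) (n := n) (a := a) (lam := lam) z
  rw [← zpow_sum_eq hz] at h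
  linear_combination -h


lemma memlp_geom {c r : ℂ} (hr : ‖r‖ < 1) :
    Memℓp (fun i : ℕ => c * r ^ i) 2 := by
  apply memℓp_gen
  have h2 : (2 : ℝ≥0∞).toReal = 2 := by simp
  rw [h2]
  have : (fun i : ℕ => ‖c * r ^ i‖ ^ (2:ℝ)) =
      fun i : ℕ => ‖c‖ ^ (2:ℝ) * (‖r‖ ^ 2) ^ i := by
    funext i
    rw [norm_mul, norm_pow]
    rw [show ((2:ℝ)) = ((2:ℕ):ℝ) by norm_num, Real.mul_rpow (norm_nonneg _) (by positivity),
      Real.rpow_natCast, Real.rpow_natCast]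
    rw [← pow_mul, ← pow_mul, mul_comm i 2]
  rw [this]
  apply Summable.mul_left
  apply summable_geometric_of_lt_one (by positivity)
  nlinarith [norm_nonneg r]

lemma memlp_valpha {p : ℕ} (ξ : Fin p → ℂ) (hξ : ∀ t, ‖ξ t‖ < 1)
    (α : Fin p → ℂ) : Memℓp (fun i : ℕ => ∑ t, α t * ξ t ^ i) 2 := by
  exact Memℓp.finset_sum Finset.univ fun t _ => memlp_geom (hξ t)

/-- evaluation at a coordinate as a continuous linear map -/
def evalCLM (i : ℕ) : ell2 →L[ℂ] ℂ :=
  LinearMap.mkContinuous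
    { toFun := fun f => f i
      map_add' := fun f g => by
        show (↑(f + g) : ∀ _ : ℕ, ℂ) i = (↑f : ∀ _ : ℕ, ℂ) i + (↑g : ∀ _ : ℕ, ℂ) i
        rw [lp.coeFn_add]; rfl
      map_smul' := fun c f => by
        show (↑(c • f) : ∀ _ : ℕ, ℂ) i = c • (↑f : ∀ _ : ℕ, ℂ) i
        rw [lp.coeFn_smul]; rfl } 1
    (fun f => by
      simpa using lp.norm_apply_le_norm (by norm_num) f i)

@[simp] lemma evalCLM_apply (i : ℕ) (f : ell2) : evalCLM i f = f i := rfl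

lemma lp_tendsto_zero (f : ell2) : Tendsto (fun i => f i) atTop (nhds (0 : ℂ)) := by
  have hsum : Summable fun i => ‖f i‖ ^ (2 : ℝ) := by
    have := lp.memℓp f
    rw [memℓp_gen_iff (by norm_num)] at this
    simpa using this
  have h0 : Tendsto (fun i => ‖f i‖ ^ (2:ℝ)) atTop (nhds 0) := hsum.tendsto_atTop_zero
  rw [tendsto_zero_iff_norm_tendsto_zero]
  have heq : (fun i => ‖f i‖) = fun i => (‖f i‖ ^ (2:ℝ)) ^ ((2:ℝ)⁻¹) := by
    funext i
    rw [← Real.rpow_mul (norm_nonneg _)]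
    norm_num
  have h1 : Tendsto (fun i => (‖f i‖ ^ (2:ℝ)) ^ ((2:ℝ)⁻¹)) atTop
      (nhds ((0:ℝ) ^ ((2:ℝ)⁻¹))) := h0.rpow_const (Or.inr (by norm_num))
  rw [Real.zero_rpow (by norm_num)] at h1
  rw [heq]
  exact h1

lemma E_row_zero (k₁ k₂ : ℕ) (E : ell2 →L[ℂ] ell2)
    (hE : ∀ i j : ℕ, (k₁ ≤ i ∨ k₂ ≤ j) → (E (lp.single 2 j 1)) i = 0)
    (v : ell2) (i : ℕ) (hi : k₁ ≤ i) : (E v) i = 0 := by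
  have hs : HasSum (fun j : ℕ => lp.single 2 j (v j)) v :=
    lp.hasSum_single (by norm_num) v
  have h2 : HasSum (fun j : ℕ => evalCLM i (E (lp.single 2 j (v j)))) (evalCLM i (E v)) :=
    ((evalCLM i).comp E).hasSum hs
  have h3 : ∀ j : ℕ, evalCLM i (E (lp.single 2 j (v j))) = 0 := by
    intro j
    have h4 : lp.single 2 j (v j) = v j • (lp.single 2 j (1 : ℂ) : ell2) := by
      rw [← lp.single_smul]
      congr 1
      simp
    rw [evalCLM_apply, h4, map_smul]
    have h5 : (v j • E (lp.single 2 j (1:ℂ))) i = v j • (E (lp.single 2 j (1:ℂ))) i := by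
      rw [lp.coeFn_smul]; rfl
    rw [h5, hE i j (Or.inl hi), smul_zero]
  rw [funext h3] at h2
  have := h2.unique hasSum_zero
  rw [evalCLM_apply] at this
  exact this

lemma alpha_zero_of_vanish {p : ℕ} (ξ : Fin p → ℂ) (hinj : Function.Injective ξ)
    (α : Fin p → ℂ) (h : ∀ i : Fin p, ∑ t, α t * ξ t ^ (i : ℕ) = 0) : α = 0 := by
  set M : Matrix (Fin p) (Fin p) ℂ := Matrix.of fun i t => ξ t ^ (i : ℕ) with hM
  have hdet : IsUnit M.det := by
    have hMt : M = (Matrix.vandermonde ξ).transpose := by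
      ext i t; rw [Matrix.transpose_apply, Matrix.vandermonde_apply]; rfl
    rw [hMt, Matrix.det_transpose, isUnit_iff_ne_zero]
    rw [Ne, Matrix.det_vandermonde_eq_zero_iff]
    rintro ⟨i, j, hij, hne⟩
    exact hne (hinj hij)
  have hinj2 : Function.Injective M.mulVec :=
    Matrix.mulVec_injective_iff_isUnit.mpr ((Matrix.isUnit_iff_isUnit_det M).mpr hdet)
  have h0 : M.mulVec α = M.mulVec 0 := by
    rw [Matrix.mulVec_zero]
    funext i
    rw [Matrix.mulVec, dotProduct]
    simp only [Pi.zero_apply]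
    rw [← h i]
    refine Finset.sum_congr rfl fun t _ => ?_
    rw [hM]; show ξ t ^ (i:ℕ) * α t = _; ring
  exact hinj2 h0

end Aux

/-- assume `k₁ ≤ m`, `λ ∉ a(𝕋)`, and that the `p = p(λ)` roots `ξ_t` of `b_λ`
in the open unit disk are pairwise distinct.  Each Vandermonde combination
`v_α = (∑_t α_t ξ_t^{i-1})_i` lies in `ℓ²`, and `λ` is an eigenvalue of `A = T(a) + E` iff
there is `α ≠ 0` such that the first `m` entries of `(A − λI) v_α` vanish; in that case
`v_α ≠ 0` and `A v_α = λ v_α`. -/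
theorem stmt_9 (m n : ℕ) (hm : 1 ≤ m) (hn : 1 ≤ n) (a : ℤ → ℂ)
    (ham : a (-(m : ℤ)) ≠ 0) (han : a (n : ℤ) ≠ 0)
    (hsupp : ∀ k : ℤ, (k < -(m : ℤ) ∨ (n : ℤ) < k) → a k = 0)
    (k₁ k₂ : ℕ) (hk₁ : 1 ≤ k₁) (hk₂ : 1 ≤ k₂) (hk₁m : k₁ ≤ m)
    (T E A : ell2 →L[ℂ] ell2)
    (hT : ∀ (v : ell2) (i : ℕ),
      (T v) i = ∑ j ∈ Finset.range (i + n + 1), a ((j : ℤ) - (i : ℤ)) * v j)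
    (hE : ∀ i j : ℕ, (k₁ ≤ i ∨ k₂ ≤ j) → (E (lp.single 2 j 1)) i = 0)
    (hA : A = T + E)
    (lam : ℂ) (hlam : lam ∉ aCircle m n a)
    (ξ : Fin (rootCount m n a lam) → ℂ) (hinj : Function.Injective ξ)
    (hroots : ((bpoly m n a lam).roots.filter fun z => ‖z‖ < 1) =
      Multiset.map ξ Finset.univ.val) :
    ∃ hmem : ∀ α : Fin (rootCount m n a lam) → ℂ,
        (fun i : ℕ => ∑ t, α t * ξ t ^ i) ∈ lp (fun _ : ℕ => ℂ) 2,
      ((∃ v : ell2, v ≠ 0 ∧ A v = lam • v) ↔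
        ∃ α : Fin (rootCount m n a lam) → ℂ, α ≠ 0 ∧ ∀ k : ℕ, k < m →
          (A ⟨fun i : ℕ => ∑ t, α t * ξ t ^ i, hmem α⟩) k = lam * ∑ t, α t * ξ t ^ k) ∧
      (∀ α : Fin (rootCount m n a lam) → ℂ, α ≠ 0 →
        (∀ k : ℕ, k < m →
          (A ⟨fun i : ℕ => ∑ t, α t * ξ t ^ i, hmem α⟩) k = lam * ∑ t, α t * ξ t ^ k) →
        (⟨fun i : ℕ => ∑ t, α t * ξ t ^ i, hmem α⟩ : ell2) ≠ 0 ∧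
          A ⟨fun i : ℕ => ∑ t, α t * ξ t ^ i, hmem α⟩ =
            lam • (⟨fun i : ℕ => ∑ t, α t * ξ t ^ i, hmem α⟩ : ell2)) := by
  classical
  have hBne : bpoly m n a lam ≠ 0 := bpoly_ne_zero hm ham
  -- no roots on the unit circle
  have hnoc : ∀ z : ℂ, ‖z‖ = 1 → Polynomial.eval z (bpoly m n a lam) ≠ 0 := by
    intro z hz h0
    have hz0 : z ≠ 0 := by
      intro h; rw [h] at hz; simp at hz
    rw [bpoly_eval hz0] at h0
    rcases mul_eq_zero.mp h0 with h | h
    · exact pow_ne_zero m hz0 h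
    · exact hlam ⟨z, hz, by linear_combination h⟩
  have hξmem : ∀ t, ξ t ∈ ((bpoly m n a lam).roots.filter fun z => ‖z‖ < 1) := by
    intro t
    rw [hroots]
    exact Multiset.mem_map_of_mem ξ (Finset.mem_val.mpr (Finset.mem_univ t))
  have hξroot : ∀ t, Polynomial.eval (ξ t) (bpoly m n a lam) = 0 := fun t =>
    Polynomial.isRoot_of_mem_roots (Multiset.mem_filter.mp (hξmem t)).1
  have hξlt : ∀ t, ‖ξ t‖ < 1 := fun t => (Multiset.mem_filter.mp (hξmem t)).2
  have hmemα : ∀ α : Fin (rootCount m n a lam) → ℂ,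
      (fun i : ℕ => ∑ t, α t * ξ t ^ i) ∈ lp (fun _ : ℕ => ℂ) 2 := fun α =>
    memlp_valpha ξ hξlt α
  -- row formulas
  have hTrow : ∀ (v : ell2) (s : ℕ), (T v) (s + m) =
      ∑ k ∈ Finset.range (m + n + 1), a ((k : ℤ) - (m : ℤ)) * v (s + k) := by
    intro v s
    rw [hT v (s + m)]
    have hsplit : s + m + n + 1 = s + (m + n + 1) := by omega
    rw [hsplit, Finset.sum_range_add]
    have h1 : ∑ j ∈ Finset.range s, a ((j : ℤ) - ((s + m : ℕ) : ℤ)) * v j = 0 := by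
      refine Finset.sum_eq_zero fun j hj => ?_
      rw [Finset.mem_range] at hj
      rw [hsupp _ (Or.inl (by push_cast; omega)), zero_mul]
    rw [h1, zero_add]
    refine Finset.sum_congr rfl fun k _ => ?_
    have h2 : ((s + k : ℕ) : ℤ) - ((s + m : ℕ) : ℤ) = (k : ℤ) - m := by push_cast; ring
    rw [h2]
  have hErow : ∀ (v : ell2) (i : ℕ), k₁ ≤ i → (E v) i = 0 := E_row_zero k₁ k₂ E hE
  have hAapp : ∀ (v : ell2) (i : ℕ), (A v) i = (T v) i + (E v) i := by
    intro v i
    rw [hA]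
    have h1 : ((T + E) v) = T v + E v := ContinuousLinearMap.add_apply T E v
    rw [h1, lp.coeFn_add]
    rfl
  have hsmul : ∀ (v : ell2) (i : ℕ), (lam • v) i = lam * v i := fun v i => by
    rw [lp.coeFn_smul]; rfl
  -- single-mode computation
  have hmode : ∀ (t : Fin (rootCount m n a lam)) (s : ℕ),
      ∑ k ∈ Finset.range (m + n + 1), a ((k : ℤ) - (m : ℤ)) * ξ t ^ (s + k) =
        lam * ξ t ^ (s + m) := by
    intro t s
    have h1 : ∑ k ∈ Finset.range (m + n + 1), a ((k : ℤ) - (m : ℤ)) * ξ t ^ (s + k) =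
        ξ t ^ s * ∑ k ∈ Finset.range (m + n + 1), a ((k : ℤ) - (m : ℤ)) * ξ t ^ k := by
      rw [Finset.mul_sum]
      exact Finset.sum_congr rfl fun k _ => by rw [pow_add]; ring
    rw [h1, sum_eq_eval (lam := lam), hξroot t, zero_add, pow_add]
    ring
  -- tail rows of T on a Vandermonde combination
  have hT_tail : ∀ (α : Fin (rootCount m n a lam) → ℂ) (s : ℕ),
      (T (⟨fun i : ℕ => ∑ t, α t * ξ t ^ i, hmemα α⟩ : ell2)) (s + m) =
        lam * ∑ t, α t * ξ t ^ (s + m) := by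
    intro α s
    rw [hTrow]
    have hcoord : ∀ j : ℕ,
        ((⟨fun i : ℕ => ∑ t, α t * ξ t ^ i, hmemα α⟩ : ell2) : ∀ _ : ℕ, ℂ) j =
          ∑ t, α t * ξ t ^ j := fun j => rfl
    simp only [hcoord]
    calc ∑ k ∈ Finset.range (m + n + 1), a ((k : ℤ) - (m : ℤ)) * ∑ t, α t * ξ t ^ (s + k)
        = ∑ k ∈ Finset.range (m + n + 1), ∑ t, α t * (a ((k : ℤ) - (m : ℤ)) * ξ t ^ (s + k)) := by
          refine Finset.sum_congr rfl fun k _ => ?_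
          rw [Finset.mul_sum]
          exact Finset.sum_congr rfl fun t _ => by ring
      _ = ∑ t, ∑ k ∈ Finset.range (m + n + 1), α t * (a ((k : ℤ) - (m : ℤ)) * ξ t ^ (s + k)) :=
          Finset.sum_comm
      _ = ∑ t, α t * (lam * ξ t ^ (s + m)) := by
          refine Finset.sum_congr rfl fun t _ => ?_
          rw [← Finset.mul_sum, hmode t s]
      _ = lam * ∑ t, α t * ξ t ^ (s + m) := by
          rw [Finset.mul_sum]
          exact Finset.sum_congr rfl fun t _ => by ring
  have hA_tail : ∀ (α : Fin (rootCount m n a lam) → ℂ) (i : ℕ), m ≤ i →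
      (A (⟨fun i : ℕ => ∑ t, α t * ξ t ^ i, hmemα α⟩ : ell2)) i =
        lam * ∑ t, α t * ξ t ^ i := by
    intro α i hi
    obtain ⟨s, rfl⟩ : ∃ s, i = s + m := ⟨i - m, by omega⟩
    rw [hAapp, hErow _ _ (by omega), add_zero, hT_tail]
  -- any eigenvector is a Vandermonde combination
  have hmain1 : ∀ v : ell2, A v = lam • v →
      ∃ α : Fin (rootCount m n a lam) → ℂ, ∀ i : ℕ, v i = ∑ t, α t * ξ t ^ i := by
    intro v hv
    have hrec : ∀ s : ℕ,
        ∑ k ∈ Finset.range (m + n + 1), (bpoly m n a lam).coeff k * v (s + k) = 0 := by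
      intro s
      have hAv : (A v) (s + m) = lam * v (s + m) := by rw [hv, hsmul]
      rw [hAapp, hErow v _ (by omega), add_zero, hTrow] at hAv
      have hite : ∑ k ∈ Finset.range (m + n + 1),
          (if k = m then lam else 0) * v (s + k) = lam * v (s + m) := by
        simp only [ite_mul, zero_mul]
        rw [Finset.sum_ite_eq' (Finset.range (m + n + 1)) m (fun k => lam * v (s + k))]
        rw [if_pos (Finset.mem_range.mpr (by omega))]
      calc ∑ k ∈ Finset.range (m + n + 1), (bpoly m n a lam).coeff k * v (s + k)
          = ∑ k ∈ Finset.range (m + n + 1),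
              (a ((k : ℤ) - (m : ℤ)) * v (s + k) - (if k = m then lam else 0) * v (s + k)) := by
            refine Finset.sum_congr rfl fun k hk => ?_
            rw [Finset.mem_range] at hk
            rw [bpoly_coeff k, if_pos (by omega : k ≤ m + n)]
            ring
        _ = (∑ k ∈ Finset.range (m + n + 1), a ((k : ℤ) - (m : ℤ)) * v (s + k)) -
              ∑ k ∈ Finset.range (m + n + 1), (if k = m then lam else 0) * v (s + k) :=
            Finset.sum_sub_distrib _ _
        _ = 0 := by rw [hAv, hite, sub_self]
    have haeval : (Polynomial.aeval shiftL (bpoly m n a lam)) (fun i : ℕ => v i) = 0 := by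
      funext s
      rw [aeval_shiftL_apply _ (Nat.lt_succ_of_le bpoly_natDegree_le) _ s]
      exact hrec s
    have hsplits : (bpoly m n a lam).Splits :=
      IsAlgClosed.splits (bpoly m n a lam)
    have hfac : bpoly m n a lam = Polynomial.C (bpoly m n a lam).leadingCoeff *
        ((bpoly m n a lam).roots.map fun z => Polynomial.X - Polynomial.C z).prod :=
      hsplits.eq_prod_roots
    have hst : ((bpoly m n a lam).roots.filter fun z => ‖z‖ < 1) +
        ((bpoly m n a lam).roots.filter fun z => ¬ ‖z‖ < 1) =
          (bpoly m n a lam).roots := Multiset.filter_add_not _ _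
    have hprod : ((bpoly m n a lam).roots.map fun z => Polynomial.X - Polynomial.C z).prod =
        (((bpoly m n a lam).roots.filter fun z => ¬ ‖z‖ < 1).map
          fun z => Polynomial.X - Polynomial.C z).prod * ∏ t, (Polynomial.X - Polynomial.C (ξ t)) := by
      conv_lhs => rw [← hst]
      rw [Multiset.map_add, Multiset.prod_add, mul_comm]
      congr 1
      rw [hroots, Multiset.map_map, Finset.prod_eq_multiset_prod]
      rfl
    have hkill0 : (Polynomial.aeval shiftL
        ((((bpoly m n a lam).roots.filter fun z => ¬ ‖z‖ < 1).map
          fun z => Polynomial.X - Polynomial.C z).prod))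
        ((Polynomial.aeval shiftL (∏ t, (Polynomial.X - Polynomial.C (ξ t)))) (fun i : ℕ => v i)) = 0 := by
      have h0 := haeval
      rw [hfac, hprod, map_mul, map_mul] at h0
      have hlc : (bpoly m n a lam).leadingCoeff ≠ 0 := Polynomial.leadingCoeff_ne_zero.mpr hBne
      rw [Module.End.mul_apply, Module.End.mul_apply, Polynomial.aeval_C,
        Module.algebraMap_end_apply] at h0
      exact (smul_eq_zero.mp h0).resolve_left hlc
    have hub : ∀ μ ∈ ((bpoly m n a lam).roots.filter fun z => ¬ ‖z‖ < 1),
        1 < ‖μ‖ := by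
      intro μ hμ
      rw [Multiset.mem_filter] at hμ
      have h1 : ‖μ‖ ≠ 1 := fun h =>
        hnoc μ h (Polynomial.isRoot_of_mem_roots hμ.1)
      exact lt_of_le_of_ne (not_lt.mp hμ.2) (Ne.symm h1)
    have hwt : Filter.Tendsto ((Polynomial.aeval shiftL (∏ t, (Polynomial.X - Polynomial.C (ξ t))))
        (fun i : ℕ => v i)) Filter.atTop (nhds 0) :=
      aeval_shiftL_tendsto _ (lp_tendsto_zero v)
    have hw0 := unstable_kill _ hub _ hwt hkill0
    exact stable_rep _ ξ hinj _ hw0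
  -- part 3
  have hpart3 : ∀ α : Fin (rootCount m n a lam) → ℂ, α ≠ 0 →
      (∀ k : ℕ, k < m →
        (A ⟨fun i : ℕ => ∑ t, α t * ξ t ^ i, hmemα α⟩) k = lam * ∑ t, α t * ξ t ^ k) →
      (⟨fun i : ℕ => ∑ t, α t * ξ t ^ i, hmemα α⟩ : ell2) ≠ 0 ∧
        A ⟨fun i : ℕ => ∑ t, α t * ξ t ^ i, hmemα α⟩ =
          lam • (⟨fun i : ℕ => ∑ t, α t * ξ t ^ i, hmemα α⟩ : ell2) := by
    intro α hα hcond
    constructor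
    · intro h0
      apply hα
      apply alpha_zero_of_vanish ξ hinj
      intro i
      have h1 := congrArg (fun x : ell2 => (x : ∀ _ : ℕ, ℂ) (i : ℕ)) h0
      simpa using h1
    · apply lp.ext
      funext i
      show (A ⟨fun i : ℕ => ∑ t, α t * ξ t ^ i, hmemα α⟩) i =
        (lam • (⟨fun i : ℕ => ∑ t, α t * ξ t ^ i, hmemα α⟩ : ell2)) i
      rw [hsmul]
      by_cases hi : i < m
      · exact hcond i hi
      · exact hA_tail α i (by omega)
  refine ⟨hmemα, ?_, hpart3⟩
  constructor
  · rintro ⟨v, hv0, hveq⟩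
    obtain ⟨α, hαrep⟩ := hmain1 v hveq
    have hvel : (⟨fun i : ℕ => ∑ t, α t * ξ t ^ i, hmemα α⟩ : ell2) = v := by
      apply lp.ext
      funext i
      exact (hαrep i).symm
    refine ⟨α, ?_, ?_⟩
    · rintro rfl
      apply hv0
      apply lp.ext
      funext i
      rw [hαrep i]
      simp
    · intro k hk
      rw [hvel, hveq, hsmul, hαrep k]
  · rintro ⟨α, hα, hcond⟩
    have h3 := hpart3 α hα hcond
    exact ⟨_, h3.1, h3.2⟩
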